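/- Let K be a field, let n ≥ 3, and let Ω and Ψ be nonscalar similarity classes of M(n,K). Then tr(ΩΨ) = { tr(ωψ) : ω ∈ Ω, ψ ∈ Ψ } equals K. -/

import Mathlib

open Matrix

private lemma scalar_of_forall {K : Type*} [Field K] {n : ℕ} (hn : 0 < n)
    {M : Matrix (Fin n) (Fin n) K}
    (h : ∀ v : Fin n → K, v ≠ 0 → ∃ a : K, a • v = M *ᵥ v) :
    ∃ c : K, M = c • 1 := by
  have hne : ∀ i : Fin n, (Pi.single i (1:K) : Fin n → K) ≠ 0 := by
    intro i hi
    have := congrFun hi i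
    simp at this
  choose a ha using fun i : Fin n => h (Pi.single i 1) (hne i)
  set i0 : Fin n := ⟨0, hn⟩ with hi0
  have key : ∀ i : Fin n, a i = a i0 := by
    intro i
    by_cases hii : i = i0
    · rw [hii]
    · have hu : (Pi.single i0 (1:K) + Pi.single i 1 : Fin n → K) ≠ 0 := by
        intro hz
        have := congrFun hz i0
        simp [Pi.single_eq_of_ne (Ne.symm hii)] at this
      obtain ⟨b, hb⟩ := h _ hu
      rw [Matrix.mulVec_add, ← ha i0, ← ha i] at hb
      have h1 := congrFun hb i0
      have h2 := congrFun hb i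
      simp [Pi.single_eq_of_ne hii, Pi.single_eq_of_ne (Ne.symm hii)] at h1 h2
      rw [← h2]; exact h1
  refine ⟨a i0, ?_⟩
  ext k l
  have := congrFun (ha l) k
  rw [Matrix.mulVec_single_one] at this
  simp only [Pi.smul_apply, smul_eq_mul, Matrix.col_apply] at this
  rw [key l] at this
  rw [← this, Matrix.smul_apply, Matrix.one_apply, Pi.single_apply]
  simp

private lemma exists_conj_col' {K : Type*} [Field K] {n : ℕ} (hn : 0 < n)
    (M : Matrix (Fin n) (Fin n) K) (hM : ∀ c : K, M ≠ c • 1)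
    (j : Fin n) (hj : j ≠ (⟨0, hn⟩ : Fin n)) :
    ∃ N : Matrix (Fin n) (Fin n) K,
      (∃ g : (Matrix (Fin n) (Fin n) K)ˣ,
        (g : Matrix (Fin n) (Fin n) K) * M * (↑g⁻¹ : Matrix (Fin n) (Fin n) K) = N) ∧
      ∀ k, N k ⟨0, hn⟩ = (1 : Matrix (Fin n) (Fin n) K) k j := by
  classical
  -- find v with (v, Mv) linearly independent
  obtain ⟨v, hv0, hva⟩ : ∃ v : Fin n → K, v ≠ 0 ∧ ∀ a : K, a • v ≠ M *ᵥ v := by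
    by_contra hc
    push_neg at hc
    obtain ⟨c, hcM⟩ := scalar_of_forall hn (fun v hv => hc v hv)
    exact hM c hcM
  set w : Fin n → K := M *ᵥ v with hw
  have hvw : v ≠ w := by
    intro h
    exact hva 1 (by rw [one_smul, ← h])
  have hs : LinearIndepOn K id ({v, w} : Set (Fin n → K)) :=
    (linearIndepOn_pair_iff id hvw hv0).mpr hva
  let bas := Module.Basis.extend hs
  haveI : Fintype ↥(hs.extend (Set.subset_univ _)) := FiniteDimensional.fintypeBasisIndex bas
  have hcard : Fintype.card ↥(hs.extend (Set.subset_univ _)) = n := by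
    rw [← Module.finrank_eq_card_basis bas, Module.finrank_fin_fun]
  have hvmem : v ∈ hs.extend (Set.subset_univ _) :=
    hs.subset_extend _ (Set.mem_insert _ _)
  have hwmem : w ∈ hs.extend (Set.subset_univ _) :=
    hs.subset_extend _ (Set.mem_insert_of_mem _ rfl)
  let ε : ↥(hs.extend (Set.subset_univ _)) ≃ Fin n := Fintype.equivFinOfCardEq hcard
  set a0 : Fin n := ε ⟨v, hvmem⟩ with ha0
  set b0 : Fin n := ε ⟨w, hwmem⟩ with hb0
  have hab : a0 ≠ b0 := by
    intro h
    exact hvw (congrArg Subtype.val (ε.injective h))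
  set z : Fin n := ⟨0, hn⟩ with hz
  set b1 : Fin n := Equiv.swap a0 z b0 with hb1
  have hb1z : b1 ≠ z := by
    rw [hb1]
    intro h
    have h2 := congrArg (Equiv.swap a0 z) h
    rw [Equiv.swap_apply_self, Equiv.swap_apply_right] at h2
    exact hab h2.symm
  let σ : Equiv.Perm (Fin n) := (Equiv.swap a0 z).trans (Equiv.swap b1 j)
  let e : ↥(hs.extend (Set.subset_univ _)) ≃ Fin n := ε.trans σ
  have hev : e ⟨v, hvmem⟩ = z := by
    show (Equiv.swap b1 j) ((Equiv.swap a0 z) a0) = z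
    rw [Equiv.swap_apply_left]
    exact Equiv.swap_apply_of_ne_of_ne (Ne.symm hb1z) (Ne.symm hj)
  have hew : e ⟨w, hwmem⟩ = j := by
    show (Equiv.swap b1 j) ((Equiv.swap a0 z) b0) = j
    rw [← hb1, Equiv.swap_apply_left]
  let bFin : Module.Basis (Fin n) K (Fin n → K) := bas.reindex e
  have hbv : bFin z = v := by
    rw [Module.Basis.reindex_apply, (Equiv.symm_apply_eq e).mpr hev.symm]
    exact Module.Basis.extend_apply_self hs _
  have hbw : bFin j = w := by
    rw [Module.Basis.reindex_apply, (Equiv.symm_apply_eq e).mpr hew.symm]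
    exact Module.Basis.extend_apply_self hs _
  set P : Matrix (Fin n) (Fin n) K := (Pi.basisFun K (Fin n)).toMatrix ⇑bFin with hP
  have hPe : ∀ i k, P i k = bFin k i := by
    intro i k
    rw [hP, Module.Basis.toMatrix_apply, Pi.basisFun_repr]
  haveI iP : Invertible P := (Pi.basisFun K (Fin n)).invertibleToMatrix bFin
  have hMP : ∀ l, (M * P) l z = P l j := by
    intro l
    rw [Matrix.mul_apply]
    have h1 : ∀ m, P m z = v m := fun m => by rw [hPe, hbv]
    calc ∑ m, M l m * P m z = ∑ m, M l m * v m := by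
          exact Finset.sum_congr rfl (fun m _ => by rw [h1])
      _ = w l := by rw [hw]; simp [Matrix.mulVec, dotProduct]
      _ = P l j := by rw [hPe, hbw]
  refine ⟨⅟P * M * P, ⟨⟨⅟P, P, invOf_mul_self P, mul_invOf_self P⟩, rfl⟩, ?_⟩
  intro k
  calc (⅟P * M * P) k z = (⅟P * (M * P)) k z := by rw [mul_assoc]
    _ = ∑ l, ⅟P k l * (M * P) l z := Matrix.mul_apply
    _ = ∑ l, ⅟P k l * P l j := Finset.sum_congr rfl (fun l _ => by rw [hMP])
    _ = (⅟P * P) k j := (Matrix.mul_apply).symm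
    _ = (1 : Matrix (Fin n) (Fin n) K) k j := by rw [invOf_mul_self]
private lemma trace_stdBasis_mul {K : Type*} [Field K] {n : ℕ} (i j : Fin n) (c : K)
    (M : Matrix (Fin n) (Fin n) K) :
    (Matrix.single i j c * M).trace = c * M j i := by
  rw [Matrix.trace, Finset.sum_eq_single i]
  · exact Matrix.single_mul_apply_same c i j i M
  · intro b _ hb
    exact Matrix.single_mul_apply_of_ne c i j b b hb M
  · simp

/-- **Lemma (traces of products of similarity classes).** Let `K` be a field, `n ≥ 3`, and let `Ω`, `Ψ` be similarity
classes of `M(n,K)` (orbits under conjugation by `GL(n,K)`).  If `Ω` and `Ψ` are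
nonscalar, then the set of traces of products `ωψ` (`ω ∈ Ω`, `ψ ∈ Ψ`) is all of `K`. -/
theorem trace_product_nonscalar_similarity_classes
    {K : Type*} [Field K] {n : ℕ} (hn : 3 ≤ n)
    (Ω Ψ : Set (Matrix (Fin n) (Fin n) K))
    (hΩclass : ∃ A : Matrix (Fin n) (Fin n) K,
      Ω = {B | ∃ g : (Matrix (Fin n) (Fin n) K)ˣ, (g : Matrix (Fin n) (Fin n) K) * A * (↑g⁻¹ : Matrix (Fin n) (Fin n) K) = B})
    (hΨclass : ∃ A : Matrix (Fin n) (Fin n) K,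
      Ψ = {B | ∃ g : (Matrix (Fin n) (Fin n) K)ˣ, (g : Matrix (Fin n) (Fin n) K) * A * (↑g⁻¹ : Matrix (Fin n) (Fin n) K) = B})
    (hΩns : ∀ ω ∈ Ω, ∀ c : K, ω ≠ c • (1 : Matrix (Fin n) (Fin n) K))
    (hΨns : ∀ ψ ∈ Ψ, ∀ c : K, ψ ≠ c • (1 : Matrix (Fin n) (Fin n) K)) :
    {τ : K | ∃ ω ∈ Ω, ∃ ψ ∈ Ψ, (ω * ψ).trace = τ} = Set.univ := by
  classical
  have hn0 : 0 < n := by omega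
  set z : Fin n := ⟨0, hn0⟩ with hzdef
  set i1 : Fin n := ⟨1, by omega⟩ with hi1def
  set i2 : Fin n := ⟨2, by omega⟩ with hi2def
  have h10 : i1 ≠ z := by simp [hi1def, hzdef, Fin.ext_iff]
  have h20 : i2 ≠ z := by simp [hi2def, hzdef, Fin.ext_iff]
  have h12 : i1 ≠ i2 := by simp [hi1def, hi2def, Fin.ext_iff]
  obtain ⟨A, hΩ⟩ := hΩclass
  obtain ⟨B, hΨ⟩ := hΨclass
  have hAmem : A ∈ Ω := by
    rw [hΩ]; exact ⟨1, by simp⟩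
  have hBmem : B ∈ Ψ := by
    rw [hΨ]; exact ⟨1, by simp⟩
  obtain ⟨C, ⟨gC, hgC⟩, hCcol⟩ := exists_conj_col' hn0 A (hΩns A hAmem) i1 h10
  obtain ⟨D0, hD0conj, hD0col⟩ := exists_conj_col' hn0 B (hΨns B hBmem) i2 h20
  -- adjust D0 so that its (i2, i1) entry differs from C i2 i2
  have hD : ∃ D : Matrix (Fin n) (Fin n) K,
      (∃ g : (Matrix (Fin n) (Fin n) K)ˣ,
        (g : Matrix (Fin n) (Fin n) K) * B * (↑g⁻¹ : Matrix (Fin n) (Fin n) K) = D) ∧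
      (∀ k, D k z = (1 : Matrix (Fin n) (Fin n) K) k i2) ∧ D i2 i1 ≠ C i2 i2 := by
    by_cases hcd : D0 i2 i1 = C i2 i2
    · set F := Matrix.single z i1 (1:K) with hF
      have hFF : F * F = 0 := Matrix.single_mul_single_of_ne 1 z i1 z h10 1
      have hinv : (1 + F) * (1 - F) = 1 := by
        have h : (1 + F) * (1 - F) = 1 - F * F := by noncomm_ring
        rw [h, hFF, sub_zero]
      have hinv2 : (1 - F) * (1 + F) = 1 := by
        have h : (1 - F) * (1 + F) = 1 - F * F := by noncomm_ring
        rw [h, hFF, sub_zero]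
      obtain ⟨gD0, hgD0⟩ := hD0conj
      set u : (Matrix (Fin n) (Fin n) K)ˣ := ⟨1 + F, 1 - F, hinv, hinv2⟩ with hu
      have hexp : (1 + F) * D0 * (1 - F) = D0 + F * D0 - D0 * F - F * D0 * F := by
        noncomm_ring
      have eFD : ∀ k, (F * D0) k z = 0 := by
        intro k
        rcases eq_or_ne k z with rfl | hk
        · rw [hF, Matrix.single_mul_apply_same, hD0col i1,
            Matrix.one_apply_ne h12, mul_zero]
        · rw [hF, Matrix.single_mul_apply_of_ne 1 z i1 k z hk]
      refine ⟨(1 + F) * D0 * (1 - F), ⟨u * gD0, ?_⟩, ?_, ?_⟩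
      · rw [_root_.mul_inv_rev, Units.val_mul, Units.val_mul, ← hgD0]
        show (1 + F) * (gD0 : Matrix (Fin n) (Fin n) K) * B * ((↑gD0⁻¹ : Matrix (Fin n) (Fin n) K) * (1 - F))
          = (1 + F) * ((gD0 : Matrix (Fin n) (Fin n) K) * B * (↑gD0⁻¹ : Matrix (Fin n) (Fin n) K)) * (1 - F)
        noncomm_ring
      · intro k
        rw [hexp]
        simp only [Matrix.sub_apply, Matrix.add_apply]
        rw [eFD k, Matrix.mul_single_apply_of_ne 1 z i1 k z (Ne.symm h10) D0,
          Matrix.mul_single_apply_of_ne 1 z i1 k z (Ne.symm h10) (F * D0)]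
        rw [hD0col k]
        ring
      · rw [hexp]
        simp only [Matrix.sub_apply, Matrix.add_apply]
        rw [Matrix.single_mul_apply_of_ne 1 z i1 i2 i1 h20 D0,
          Matrix.mul_single_apply_same, hD0col i2, Matrix.one_apply_eq,
          Matrix.mul_single_apply_same,
          Matrix.single_mul_apply_of_ne 1 z i1 i2 z h20 D0, hcd]
        intro h
        simp only [add_zero, one_mul, zero_mul, sub_zero] at h
        exact one_ne_zero (sub_eq_self.mp h)
    · exact ⟨D0, hD0conj, hD0col, hcd⟩
  obtain ⟨D, ⟨gD, hgD⟩, hDcol, hne⟩ := hD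
  refine Set.eq_univ_of_forall fun τ => ?_
  simp only [Set.mem_setOf_eq]
  set c : K := C i2 i2 - D i2 i1 with hc
  have hc0 : c ≠ 0 := sub_ne_zero_of_ne (Ne.symm hne)
  set t : K := ((C * D).trace - τ) / c with ht
  set E := Matrix.single z i2 t with hE
  have hEE : E * E = 0 := Matrix.single_mul_single_of_ne t z i2 z h20 t
  have hinv : (1 + E) * (1 - E) = 1 := by
    have h : (1 + E) * (1 - E) = 1 - E * E := by noncomm_ring
    rw [h, hEE, sub_zero]
  have hinv2 : (1 - E) * (1 + E) = 1 := by
    have h : (1 - E) * (1 + E) = 1 - E * E := by noncomm_ring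
    rw [h, hEE, sub_zero]
  set u : (Matrix (Fin n) (Fin n) K)ˣ := ⟨1 + E, 1 - E, hinv, hinv2⟩ with hu
  refine ⟨C, ?_, (1 + E) * D * (1 - E), ?_, ?_⟩
  · rw [hΩ]; exact ⟨gC, hgC⟩
  · rw [hΨ]
    refine ⟨u * gD, ?_⟩
    rw [_root_.mul_inv_rev, Units.val_mul, Units.val_mul, ← hgD]
    show (1 + E) * (gD : Matrix (Fin n) (Fin n) K) * B * ((↑gD⁻¹ : Matrix (Fin n) (Fin n) K) * (1 - E))
      = (1 + E) * ((gD : Matrix (Fin n) (Fin n) K) * B * (↑gD⁻¹ : Matrix (Fin n) (Fin n) K)) * (1 - E)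
    noncomm_ring
  · have hexp : C * ((1 + E) * D * (1 - E))
        = C * D + C * (E * D) - C * (D * E) - C * (E * (D * E)) := by noncomm_ring
    have T1 : (C * (E * D)).trace = t * D i2 i1 := by
      rw [Matrix.trace_mul_comm, mul_assoc, hE, trace_stdBasis_mul]
      congr 1
      rw [Matrix.mul_apply]
      calc ∑ k, D i2 k * C k z
          = ∑ k, D i2 k * (1 : Matrix (Fin n) (Fin n) K) k i1 :=
            Finset.sum_congr rfl (fun k _ => by rw [hCcol k])
        _ = D i2 i1 := by
            simp only [Matrix.one_apply, mul_ite, mul_one, mul_zero]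
            simp [Finset.sum_ite_eq']
    have T2 : (C * (D * E)).trace = t * C i2 i2 := by
      rw [← mul_assoc, Matrix.trace_mul_comm, hE, trace_stdBasis_mul]
      congr 1
      rw [Matrix.mul_apply]
      calc ∑ k, C i2 k * D k z
          = ∑ k, C i2 k * (1 : Matrix (Fin n) (Fin n) K) k i2 :=
            Finset.sum_congr rfl (fun k _ => by rw [hDcol k])
        _ = C i2 i2 := by
            simp only [Matrix.one_apply, mul_ite, mul_one, mul_zero]
            simp [Finset.sum_ite_eq']
    have T3 : (C * (E * (D * E))).trace = 0 := by
      rw [Matrix.trace_mul_comm, mul_assoc, hE, trace_stdBasis_mul]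
      have : ((D * E) * C) i2 z = 0 := by
        rw [Matrix.mul_apply]
        calc ∑ k, (D * E) i2 k * C k z
            = ∑ k, (D * E) i2 k * (1 : Matrix (Fin n) (Fin n) K) k i1 :=
              Finset.sum_congr rfl (fun k _ => by rw [hCcol k])
          _ = (D * E) i2 i1 := by
              simp only [Matrix.one_apply, mul_ite, mul_one, mul_zero]
              simp [Finset.sum_ite_eq']
          _ = 0 := by
              rw [hE]
              exact Matrix.mul_single_apply_of_ne t z i2 i2 i1 h12 D
      rw [this, mul_zero]
    rw [hexp, Matrix.trace_sub, Matrix.trace_sub, Matrix.trace_add, T1, T2, T3]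
    have hsimp : (C * D).trace + t * D i2 i1 - t * C i2 i2 - 0
        = (C * D).trace - t * c := by rw [hc]; ring
    rw [hsimp, ht, div_mul_cancel₀ _ hc0]
    ring
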